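/- Theorem 1, almost-sure consistency with deterministic imputation: assume Fisher's sharp null, i.e. Y i true = Y i false for every unit i. Let G : Ω → (I → Option ℝ) → (I → ℝ) be a deterministic imputation algorithm, T : Ω → (I → ℝ) → ℝ a test statistic, z₀ ∈ Ω the observed assignment, t := T z₀ (G z₀ (Ystar z₀)) the observed statistic value, and p := (𝒫.toMeasure {z | T z (G z (Ystar z)) ≥ t}).toReal the finite-population-exact p-value. For L ≥ 1 define the Monte Carlo p-value p̂ L := (1/L) * ∑_{l=0}^{L-1} (indicator of the event {ω | T (Z l ω) (G (Z l ω) (Ystar z₀)) ≥ t}). Then p̂ L converges to p μ-almost surely as L → ∞. -/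

import Mathlib

open MeasureTheory ProbabilityTheory Filter

/-- Theorem 1, almost-sure consistency with deterministic imputation. -/
theorem theorem1_as_consistency_deterministic
    {Ω : Type*} [Fintype Ω] [Nonempty Ω] [MeasurableSpace Ω] [MeasurableSingletonClass Ω]
    {I : Type*} [Fintype I]
    {Ω' : Type*} [MeasurableSpace Ω'] (μ : Measure Ω') [IsProbabilityMeasure μ]
    (P : PMF Ω)                       -- randomization distribution (Assumption 1)
    (arm : Ω → I → Bool)              -- treatment arm of each unit under each assignment
    (Y : I → Bool → ℝ)                -- fixed potential outcomes
    (η : (I → ℝ) → (I → Bool))        -- missingness mechanism (Assumption 2)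
    (Yobs : Ω → I → ℝ)
    (hYobs : ∀ z i, Yobs z i = Y i (arm z i))
    (Mis : Ω → I → Bool)
    (hMis : ∀ z, Mis z = η (Yobs z))
    (Ystar : Ω → I → Option ℝ)
    (hYstar : ∀ z i, Ystar z i = if Mis z i then none else some (Yobs z i))
    (hnull : ∀ i, Y i true = Y i false)  -- Fisher's sharp null
    (G : Ω → (I → Option ℝ) → (I → ℝ))   -- deterministic imputation algorithm
    (T : Ω → (I → ℝ) → ℝ)                -- test statistic
    (z₀ : Ω)                             -- observed assignment
    (Z : ℕ → Ω' → Ω)                     -- Monte Carlo re-randomization draws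
    (hZmeas : ∀ l, Measurable (Z l))
    (hZlaw : ∀ l, μ.map (Z l) = P.toMeasure)             -- identically distributed with law P
    (hZindep : iIndepFun Z μ)   -- independent
    (t : ℝ) (ht : t = T z₀ (G z₀ (Ystar z₀)))            -- observed statistic value
    (p : ℝ)
    (hp : p = (P.toMeasure {z | T z (G z (Ystar z)) ≥ t}).toReal)  -- exact p-value
    (phat : ℕ → Ω' → ℝ)
    (hphat : ∀ L ω, phat L ω =
      (1 / (L : ℝ)) * ∑ l ∈ Finset.range L,
        (if T (Z l ω) (G (Z l ω) (Ystar z₀)) ≥ t then (1 : ℝ) else 0)) :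
    ∀ᵐ ω ∂μ, Tendsto (fun L => phat L ω) atTop (nhds p) := by
  -- Under the sharp null, Ystar z = Ystar z₀ for all z.
  have hYobs' : ∀ z, Yobs z = Yobs z₀ := by
    intro z
    funext i
    rw [hYobs, hYobs]
    cases arm z i <;> cases arm z₀ i <;> simp [hnull i]
  have hYstar' : ∀ z, Ystar z = Ystar z₀ := by
    intro z
    funext i
    rw [hYstar, hYstar, hMis, hMis, hYobs' z]
  -- the set of assignments with large statistic
  set S : Set Ω := {z | T z (G z (Ystar z₀)) ≥ t} with hS
  have hSmeas : MeasurableSet S := (Set.toFinite S).measurableSet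
  set f : Ω → ℝ := S.indicator (fun _ => (1 : ℝ)) with hf
  have hfmeas : Measurable f := (measurable_const.indicator hSmeas)
  set X : ℕ → Ω' → ℝ := fun l ω => f (Z l ω) with hX
  have hXmeas : ∀ l, Measurable (X l) := fun l => hfmeas.comp (hZmeas l)
  have hident : ∀ l, IdentDistrib (X l) (X 0) μ μ := by
    intro l
    refine ⟨(hXmeas l).aemeasurable, (hXmeas 0).aemeasurable, ?_⟩
    rw [show X l = f ∘ Z l from rfl, show X 0 = f ∘ Z 0 from rfl,
      ← Measure.map_map hfmeas (hZmeas l), ← Measure.map_map hfmeas (hZmeas 0),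
      hZlaw l, hZlaw 0]
  have hindep : Pairwise (Function.onFun (IndepFun · · μ) X) := by
    intro i j hij
    exact (hZindep.indepFun hij).comp hfmeas hfmeas
  have hX0 : X 0 = (Z 0 ⁻¹' S).indicator (fun _ => (1 : ℝ)) := by
    funext ω
    simp only [hX, hf]
    by_cases h : Z 0 ω ∈ S
    · rw [Set.indicator_of_mem h, Set.indicator_of_mem (Set.mem_preimage.mpr h)]
    · rw [Set.indicator_of_notMem h,
        Set.indicator_of_notMem (fun hc => h (Set.mem_preimage.mp hc))]
  have hint : Integrable (X 0) μ := by
    rw [hX0]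
    exact (integrable_const (1 : ℝ)).indicator ((hZmeas 0) hSmeas)
  have hSeq : {z | T z (G z (Ystar z)) ≥ t} = S := by
    ext z
    simp [hS, hYstar' z]
  have hmean : μ[X 0] = p := by
    rw [hX0, integral_indicator_const (1 : ℝ) ((hZmeas 0) hSmeas)]
    have hμS : μ (Z 0 ⁻¹' S) = P.toMeasure S := by
      rw [← hZlaw 0, Measure.map_apply (hZmeas 0) hSmeas]
    rw [measureReal_def, hμS, hp, smul_eq_mul, mul_one, hSeq]
  have hsl := strong_law_ae_real X hint hindep hident
  rw [hmean] at hsl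
  filter_upwards [hsl] with ω hω
  have heq : (fun L => phat L ω) = fun L : ℕ => (∑ l ∈ Finset.range L, X l ω) / L := by
    funext L
    rw [hphat]
    have hsum : (∑ l ∈ Finset.range L,
        (if T (Z l ω) (G (Z l ω) (Ystar z₀)) ≥ t then (1 : ℝ) else 0))
        = ∑ l ∈ Finset.range L, X l ω := by
      apply Finset.sum_congr rfl
      intro l _
      simp [hX, hf, Set.indicator_apply, hS, Set.mem_setOf_eq]
    rw [hsum]
    ring
  rw [heq]
  exact hω
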